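/- Let ζ be a primitive cube root of unity. The complex vector space of homogeneous polynomials f of degree 6 in ℂ[z₀,z₁,z₂] satisfying f(λz₀,λ²z₁,λ⁴z₂) = f(z₀,z₁,z₂) and f(z₂,z₀,z₁) = ζ·f(z₀,z₁,z₂) is one-dimensional, spanned by z₀⁵z₁ + ζ²·z₂⁵z₀ + ζ·z₁⁵z₂. -/

import Mathlib

open MvPolynomial

noncomputable def lam : ℂ := Complex.exp (2 * Real.pi * Complex.I / 7)

/-- The substitution `d : (z₀, z₁, z₂) ↦ (λz₀, λ²z₁, λ⁴z₂)` acting on polynomials. -/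
noncomputable def dSub : MvPolynomial (Fin 3) ℂ →ₐ[ℂ] MvPolynomial (Fin 3) ℂ :=
  aeval ![C lam * X 0, C (lam ^ 2) * X 1, C (lam ^ 4) * X 2]

/-- The cyclic substitution `τ : (z₀, z₁, z₂) ↦ (z₂, z₀, z₁)` acting on polynomials. -/
noncomputable def tauSub : MvPolynomial (Fin 3) ℂ →ₐ[ℂ] MvPolynomial (Fin 3) ℂ :=
  aeval ![X 2, X 0, X 1]

lemma hlam : IsPrimitiveRoot lam 7 := by
  have := Complex.isPrimitiveRoot_exp 7 (by norm_num)
  simpa [lam] using this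

noncomputable def m510 : Fin 3 →₀ ℕ := Finsupp.single 0 5 + Finsupp.single 1 1
noncomputable def m051 : Fin 3 →₀ ℕ := Finsupp.single 1 5 + Finsupp.single 2 1
noncomputable def m105 : Fin 3 →₀ ℕ := Finsupp.single 2 5 + Finsupp.single 0 1
noncomputable def m222 : Fin 3 →₀ ℕ :=
  Finsupp.single 0 2 + Finsupp.single 1 2 + Finsupp.single 2 2

lemma finsupp3 (s : Fin 3 →₀ ℕ) :
    Finsupp.single 0 (s 0) + Finsupp.single 1 (s 1) + Finsupp.single 2 (s 2) = s := by
  ext i; fin_cases i <;> simp [Finsupp.single_apply]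

lemma deg3 (d : Fin 3 →₀ ℕ) : d.degree = d 0 + d 1 + d 2 := by
  rw [show d.degree = ∑ i ∈ d.support, d i from rfl, Finset.sum_subset (Finset.subset_univ _)
    (by intro x _ hx; simpa using hx)]
  simp [Fin.sum_univ_three]

lemma dSub_monomial (s : Fin 3 →₀ ℕ) (a : ℂ) :
    dSub (monomial s a) = monomial s (lam ^ (s 0 + 2 * s 1 + 4 * s 2) * a) := by
  rw [dSub, aeval_monomial]
  rw [Finsupp.prod_fintype _ _ (by intro i; simp), Fin.prod_univ_three]
  simp only [Matrix.cons_val_zero, Matrix.cons_val_one, Matrix.head_cons,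
    Matrix.cons_val_two, Matrix.tail_cons, mul_pow, ← C_pow, ← pow_mul,
    X_pow_eq_monomial]
  rw [C_mul_monomial, C_mul_monomial, C_mul_monomial]
  rw [monomial_mul, monomial_mul]
  rw [show (algebraMap ℂ (MvPolynomial (Fin 3) ℂ)) a = C a from rfl, C_mul_monomial]
  rw [finsupp3]
  congr 1
  ring

lemma tau_rename : tauSub = rename ![2, 0, 1] := by
  apply MvPolynomial.algHom_ext
  intro i
  fin_cases i <;> simp [tauSub, rename_X]

lemma coeff_dSub (m : Fin 3 →₀ ℕ) (f : MvPolynomial (Fin 3) ℂ) :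
    coeff m (dSub f) = lam ^ (m 0 + 2 * m 1 + 4 * m 2) * coeff m f := by
  induction f using MvPolynomial.induction_on' with
  | monomial s a =>
    rw [dSub_monomial, coeff_monomial, coeff_monomial]
    split_ifs with h
    · subst h; rfl
    · rw [mul_zero]
  | add p q hp hq =>
    rw [map_add, coeff_add, coeff_add, mul_add, hp, hq]

lemma cinj : Function.Injective (![2, 0, 1] : Fin 3 → Fin 3) := by decide

lemma coeff_tauSub (m : Fin 3 →₀ ℕ) (f : MvPolynomial (Fin 3) ℂ) :
    coeff (Finsupp.mapDomain ![2, 0, 1] m) (tauSub f) = coeff m f := by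
  rw [tau_rename]
  exact coeff_rename_mapDomain _ cinj f m

lemma map510 : Finsupp.mapDomain ![2, 0, 1] m510 = m105 := by
  rw [m510, m105, Finsupp.mapDomain_add, Finsupp.mapDomain_single, Finsupp.mapDomain_single]
  simp only [Matrix.cons_val_zero, Matrix.cons_val_one, Matrix.head_cons]

lemma map051 : Finsupp.mapDomain ![2, 0, 1] m051 = m510 := by
  rw [m051, m510, Finsupp.mapDomain_add, Finsupp.mapDomain_single, Finsupp.mapDomain_single]
  simp only [Matrix.cons_val_zero, Matrix.cons_val_one, Matrix.head_cons, Matrix.cons_val_two, Matrix.tail_cons]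

lemma map105 : Finsupp.mapDomain ![2, 0, 1] m105 = m051 := by
  rw [m105, m051, Finsupp.mapDomain_add, Finsupp.mapDomain_single, Finsupp.mapDomain_single]
  simp only [Matrix.cons_val_zero, Matrix.cons_val_one, Matrix.head_cons,
    Matrix.cons_val_two, Matrix.tail_cons]

lemma map222 : Finsupp.mapDomain ![2, 0, 1] m222 = m222 := by
  rw [m222, Finsupp.mapDomain_add, Finsupp.mapDomain_add, Finsupp.mapDomain_single,
    Finsupp.mapDomain_single, Finsupp.mapDomain_single]
  simp only [Matrix.cons_val_zero, Matrix.cons_val_one, Matrix.head_cons,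
    Matrix.cons_val_two, Matrix.tail_cons]
  abel

lemma hg (ζ : ℂ) : (X 0 ^ 5 * X 1 + C (ζ ^ 2) * (X 2 ^ 5 * X 0) + C ζ * (X 1 ^ 5 * X 2) :
    MvPolynomial (Fin 3) ℂ) = monomial m510 1 + monomial m105 (ζ ^ 2) + monomial m051 ζ := by
  rw [m510, m105, m051]
  rw [X_pow_eq_monomial, X_pow_eq_monomial, X_pow_eq_monomial]
  rw [show (X 1 : MvPolynomial (Fin 3) ℂ) = monomial (Finsupp.single 1 1) 1 from rfl,
    show (X 0 : MvPolynomial (Fin 3) ℂ) = monomial (Finsupp.single 0 1) 1 from rfl,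
    show (X 2 : MvPolynomial (Fin 3) ℂ) = monomial (Finsupp.single 2 1) 1 from rfl]
  rw [monomial_mul, monomial_mul, monomial_mul, C_mul_monomial, C_mul_monomial]
  norm_num

lemma ne1 : m510 ≠ m051 := fun h => by simpa [m510, m051] using DFunLike.congr_fun h 0
lemma ne2 : m510 ≠ m105 := fun h => by simpa [m510, m105] using DFunLike.congr_fun h 1
lemma ne3 : m051 ≠ m105 := fun h => by simpa [m051, m105] using DFunLike.congr_fun h 1

lemma vals510 : m510 0 = 5 ∧ m510 1 = 1 ∧ m510 2 = 0 := by
  refine ⟨?_, ?_, ?_⟩ <;> simp [m510, Finsupp.single_apply]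
lemma vals051 : m051 0 = 0 ∧ m051 1 = 5 ∧ m051 2 = 1 := by
  refine ⟨?_, ?_, ?_⟩ <;> simp [m051, Finsupp.single_apply]
lemma vals105 : m105 0 = 1 ∧ m105 1 = 0 ∧ m105 2 = 5 := by
  refine ⟨?_, ?_, ?_⟩ <;> simp [m105, Finsupp.single_apply]

/-- For a primitive cube root of unity ζ, the space of homogeneous degree-6 polynomials `f`
with `f ∘ d = f` and `f ∘ τ = ζ·f` is one-dimensional, spanned by
`z₀⁵z₁ + ζ²·z₂⁵z₀ + ζ·z₁⁵z₂`. -/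
theorem degree_six_H_eigenspace (ζ : ℂ) (hζ : IsPrimitiveRoot ζ 3) :
    {f : MvPolynomial (Fin 3) ℂ | f.IsHomogeneous 6 ∧ dSub f = f ∧ tauSub f = C ζ * f} =
      (Submodule.span ℂ
        ({X 0 ^ 5 * X 1 + C (ζ ^ 2) * (X 2 ^ 5 * X 0) + C ζ * (X 1 ^ 5 * X 2)} :
          Set (MvPolynomial (Fin 3) ℂ)) : Set (MvPolynomial (Fin 3) ℂ)) ∧
    (X 0 ^ 5 * X 1 + C (ζ ^ 2) * (X 2 ^ 5 * X 0) + C ζ * (X 1 ^ 5 * X 2) :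
      MvPolynomial (Fin 3) ℂ) ≠ 0 := by
  have hζ3 : ζ ^ 3 = 1 := hζ.pow_eq_one
  have hζ0 : ζ ≠ 0 := hζ.ne_zero (by norm_num)
  have hζ1 : ζ ≠ 1 := hζ.ne_one (by norm_num)
  have hzz : ζ * ζ ^ 2 = 1 := by rw [show ζ * ζ ^ 2 = ζ ^ 3 by ring, hζ3]
  have hl7 : lam ^ 7 = 1 := hlam.pow_eq_one
  have hl14 : lam ^ 14 = 1 := by rw [show (14 : ℕ) = 7 * 2 from rfl, pow_mul, hl7, one_pow]
  have hl21 : lam ^ 21 = 1 := by rw [show (21 : ℕ) = 7 * 3 from rfl, pow_mul, hl7, one_pow]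
  constructor
  · ext f
    simp only [Set.mem_setOf_eq, SetLike.mem_coe, Submodule.mem_span_singleton, hg ζ]
    constructor
    · rintro ⟨hhom, hd, ht⟩
      refine ⟨coeff m510 f, ?_⟩
      set a := coeff m510 f with ha
      have htau : ∀ m : Fin 3 →₀ ℕ,
          ζ * coeff (Finsupp.mapDomain ![2, 0, 1] m) f = coeff m f := by
        intro m
        have := coeff_tauSub m f
        rw [ht, coeff_C_mul] at this
        exact this
      have h105 : coeff m105 f = ζ ^ 2 * a := by
        have h1 := htau m510
        rw [map510, ← ha] at h1
        have h2 : ζ * (ζ ^ 2 * a) = ζ * coeff m105 f := by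
          rw [h1, ← mul_assoc, hzz, one_mul]
        exact (mul_left_cancel₀ hζ0 h2).symm
      have h051 : coeff m051 f = ζ * a := by
        have h1 := htau m051
        rw [map051, ← ha] at h1
        exact h1.symm
      have h222 : coeff m222 f = 0 := by
        have h1 := htau m222
        rw [map222] at h1
        by_contra hc
        exact hζ1 (mul_right_cancel₀ hc (by rw [h1, one_mul]))
      have key : ∀ m : Fin 3 →₀ ℕ, coeff m f ≠ 0 → m = m510 ∨ m = m051 ∨ m = m105 := by
        intro m hm
        have hdeg : m 0 + m 1 + m 2 = 6 := by
          by_contra hne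
          exact hm (hhom.coeff_eq_zero (by rw [deg3]; exact hne))
        have hdvd : (7 : ℕ) ∣ (m 0 + 2 * m 1 + 4 * m 2) := by
          have h1 := coeff_dSub m f
          rw [hd] at h1
          have : lam ^ (m 0 + 2 * m 1 + 4 * m 2) = 1 :=
            mul_right_cancel₀ hm (by rw [← h1, one_mul])
          exact (hlam.pow_eq_one_iff_dvd _).mp this
        obtain ⟨k, hk⟩ := hdvd
        have hcases : (m 0 = 5 ∧ m 1 = 1 ∧ m 2 = 0) ∨ (m 0 = 0 ∧ m 1 = 5 ∧ m 2 = 1) ∨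
            (m 0 = 1 ∧ m 1 = 0 ∧ m 2 = 5) ∨ (m 0 = 2 ∧ m 1 = 2 ∧ m 2 = 2) := by
          have hb2 : m 2 ≤ 6 := by omega
          interval_cases h : (m 2) <;> omega
        have meq : ∀ x y z : ℕ, m 0 = x → m 1 = y → m 2 = z →
            m = Finsupp.single 0 x + Finsupp.single 1 y + Finsupp.single 2 z := by
          rintro x y z rfl rfl rfl
          exact (finsupp3 m).symm
        rcases hcases with ⟨h0, h1, h2⟩ | ⟨h0, h1, h2⟩ | ⟨h0, h1, h2⟩ | ⟨h0, h1, h2⟩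
        · left
          rw [meq _ _ _ h0 h1 h2, m510]
          ext i; fin_cases i <;> simp [Finsupp.single_apply]
        · right; left
          rw [meq _ _ _ h0 h1 h2, m051]
          ext i; fin_cases i <;> simp [Finsupp.single_apply]
        · right; right
          rw [meq _ _ _ h0 h1 h2, m105]
          ext i; fin_cases i <;> simp [Finsupp.single_apply]
        · exfalso
          apply hm
          rw [meq _ _ _ h0 h1 h2, ← h222, m222]
      ext m
      rw [coeff_smul, coeff_add, coeff_add, coeff_monomial, coeff_monomial,
        coeff_monomial, smul_eq_mul]
      by_cases e1 : m = m510
      · subst e1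
        rw [if_pos rfl, if_neg ne2.symm, if_neg ne1.symm]
        simp [ha]
      by_cases e2 : m = m051
      · subst e2
        rw [if_neg ne1, if_neg ne3.symm, if_pos rfl, h051]
        ring
      by_cases e3 : m = m105
      · subst e3
        rw [if_neg ne2, if_pos rfl, if_neg ne3, h105]
        ring
      · rw [if_neg (fun h => e1 h.symm), if_neg (fun h => e3 h.symm),
          if_neg (fun h => e2 h.symm)]
        by_contra hc
        rcases key m (fun h0 => hc (by rw [h0]; ring)) with h | h | h
        · exact e1 h
        · exact e2 h
        · exact e3 h
    · rintro ⟨c, rfl⟩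
      have hgh : (monomial m510 (1 : ℂ) + monomial m105 (ζ ^ 2) +
          monomial m051 ζ).IsHomogeneous 6 := by
        refine ((isHomogeneous_monomial _ ?_).add (isHomogeneous_monomial _ ?_)).add
          (isHomogeneous_monomial _ ?_) <;>
          simp [deg3, m510, m105, m051, Finsupp.single_apply]
      have hdg : dSub (monomial m510 (1 : ℂ) + monomial m105 (ζ ^ 2) + monomial m051 ζ) =
          monomial m510 1 + monomial m105 (ζ ^ 2) + monomial m051 ζ := by
        rw [map_add, map_add, dSub_monomial, dSub_monomial, dSub_monomial,
          vals510.1, vals510.2.1, vals510.2.2, vals105.1, vals105.2.1, vals105.2.2,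
          vals051.1, vals051.2.1, vals051.2.2]
        norm_num [hl7, hl14, hl21]
      have htg : tauSub (monomial m510 (1 : ℂ) + monomial m105 (ζ ^ 2) + monomial m051 ζ) =
          C ζ * (monomial m510 1 + monomial m105 (ζ ^ 2) + monomial m051 ζ) := by
        rw [tau_rename, map_add, map_add, rename_monomial, rename_monomial,
          rename_monomial]
        rw [show Finsupp.mapDomain ![2, 0, 1] m510 = m105 from map510,
          show Finsupp.mapDomain ![2, 0, 1] m105 = m051 from map105,
          show Finsupp.mapDomain ![2, 0, 1] m051 = m510 from map051]
        rw [mul_add, mul_add, C_mul_monomial, C_mul_monomial, C_mul_monomial,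
          mul_one, hzz, show ζ * ζ = ζ ^ 2 by ring]
        abel
      refine ⟨?_, ?_, ?_⟩
      · have := hgh.C_mul c
        simpa [C_mul', smul_add] using this
      · rw [map_smul, hdg]
      · rw [map_smul, htg, mul_smul_comm]
  · rw [hg ζ]
    intro h
    have h1 : coeff m510 (monomial m510 (1 : ℂ) + monomial m105 (ζ ^ 2) +
        monomial m051 ζ) = 0 := by rw [h]; rfl
    rw [coeff_add, coeff_add, coeff_monomial, coeff_monomial, coeff_monomial,
      if_pos rfl, if_neg ne2.symm, if_neg ne1.symm] at h1
    norm_num at h1
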